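/- Let h, c, s be integers with h ≥ 2, 1 ≤ c ≤ ⌊h/2⌋, and s ≥ h+1. Define the sequence {B_n} of rationals (or reals) by B_0 = 1, B_1 = h/s, and B_{n+2} = ((h−c)/s)·B_{n+1} + (c/s)·B_n for all n ≥ 0. Set Δ = ((h−c)/s)² + 4c/s and α = ((c−h) + s√Δ)/(2c). Then for every n ≥ 0, B_n ≤ (4/√Δ)·α^{−n}. -/

import Mathlib

/-- for integers `h ≥ 2`, `1 ≤ c ≤ ⌊h/2⌋`, `s ≥ h+1`, the sequence
`B₀ = 1`, `B₁ = h/s`, `B_{n+2} = ((h-c)/s)·B_{n+1} + (c/s)·B_n` satisfies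
`B_n ≤ (4/√Δ)·α⁻ⁿ`, where `Δ = ((h-c)/s)² + 4c/s` and `α = ((c-h)+s√Δ)/(2c)`. -/
theorem stmt14 (h c s : ℕ) (hh : 2 ≤ h) (hc1 : 1 ≤ c) (hc2 : c ≤ h / 2) (hs : h + 1 ≤ s)
    (B : ℕ → ℝ) (hB0 : B 0 = 1) (hB1 : B 1 = (h : ℝ) / s)
    (hBrec : ∀ n, B (n + 2) = ((h : ℝ) - c) / s * B (n + 1) + (c : ℝ) / s * B n)
    (Δ α : ℝ)
    (hΔ : Δ = (((h : ℝ) - c) / s) ^ 2 + 4 * c / s)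
    (hα : α = (((c : ℝ) - h) + s * Real.sqrt Δ) / (2 * c)) :
    ∀ n : ℕ, B n ≤ 4 / Real.sqrt Δ * (α ^ n)⁻¹ := by
  have hcN : 2 * c ≤ h := by omega
  have hcR : (1 : ℝ) ≤ c := by exact_mod_cast hc1
  have h2cR : 2 * (c : ℝ) ≤ h := by exact_mod_cast hcN
  have hhR : (2 : ℝ) ≤ h := by exact_mod_cast hh
  have hsR : (h : ℝ) + 1 ≤ s := by exact_mod_cast hs
  have hspos : (0 : ℝ) < s := by linarith
  have hsne : (s : ℝ) ≠ 0 := hspos.ne'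
  have hcpos : (0 : ℝ) < c := by linarith
  have hcne : (c : ℝ) ≠ 0 := hcpos.ne'
  set p : ℝ := ((h : ℝ) - c) / s with hp
  set q : ℝ := (c : ℝ) / s with hq
  have hp0 : 0 ≤ p := by
    apply div_nonneg _ hspos.le; linarith
  have hq0 : 0 < q := div_pos hcpos hspos
  have hp1 : p ≤ 1 := by
    rw [div_le_one hspos]; linarith
  have hq12 : q ≤ 1 / 2 := by
    rw [hq, div_le_div_iff₀ hspos (by norm_num)]; linarith
  have hΔ' : Δ = p ^ 2 + 4 * q := by rw [hΔ, hp, hq]; ring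
  have hΔpos : 0 < Δ := by rw [hΔ']; positivity
  set r : ℝ := Real.sqrt Δ with hrdef
  have hrpos : 0 < r := Real.sqrt_pos.mpr hΔpos
  have hr2 : r ^ 2 = Δ := Real.sq_sqrt hΔpos.le
  have hrpq : r ^ 2 = p ^ 2 + 4 * q := hr2.trans hΔ'
  have hr2le : r ≤ 2 := by
    nlinarith [hrpos]
  set L : ℝ := (p + r) / 2 with hL
  clear_value p q r L
  have hLpos : 0 < L := by rw [hL]; positivity
  have hL2 : L ^ 2 = p * L + q := by
    rw [hL]; linear_combination (1 / 4 : ℝ) * hrpq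
  have hrs : (s : ℝ) ^ 2 * r ^ 2 = ((h : ℝ) - c) ^ 2 + 4 * c * s := by
    rw [hr2, hΔ, hp]; field_simp
  have hαL : α * L = 1 := by
    rw [hα, hL, hp]
    field_simp
    linear_combination hrs
  have hinv : ∀ n : ℕ, (α ^ n)⁻¹ = L ^ n := by
    intro n
    refine inv_eq_of_mul_eq_one_right ?_
    rw [← mul_pow, hαL, one_pow]
  have key : ∀ n : ℕ, B n ≤ 4 / r * L ^ n := by
    intro n
    induction n using Nat.twoStepInduction with
    | zero =>
      rw [hB0, pow_zero, mul_one, le_div_iff₀ hrpos]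
      linarith
    | one =>
      have hhs : (h : ℝ) / s = p + q := by rw [hp, hq]; field_simp; ring
      rw [hB1, hhs, pow_one, hL, div_mul_eq_mul_div, le_div_iff₀ hrpos]
      nlinarith [hp0, hq0.le, hrpos, hr2le, hq12]
    | more n ih1 ih2 =>
      rw [hBrec n]
      have h1 : p * B (n + 1) ≤ p * (4 / r * L ^ (n + 1)) :=
        mul_le_mul_of_nonneg_left ih2 hp0
      have h2 : q * B n ≤ q * (4 / r * L ^ n) :=
        mul_le_mul_of_nonneg_left ih1 hq0.le
      have heq : p * (4 / r * L ^ (n + 1)) + q * (4 / r * L ^ n)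
          = 4 / r * L ^ (n + 2) := by
        have : L ^ (n + 2) = L ^ n * (p * L + q) := by
          rw [← hL2]; ring
        rw [this]; ring
      calc p * B (n + 1) + q * B n
          ≤ p * (4 / r * L ^ (n + 1)) + q * (4 / r * L ^ n) := add_le_add h1 h2
        _ = 4 / r * L ^ (n + 2) := heq
  intro n
  rw [hinv n]
  exact key n
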